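/- Let ω ∈ ℂ and k ∈ ℂ³ with Im k ≠ 0 and Im ω > |Im k|. Set v = (Im k)/(Im ω) ∈ ℝ³ and γ = (1 − |v|²)^{−1/2}. Then 0 < |v| < 1, and the Lorentz boost Λ(v), defined by ω′ = γ(ω − v·k) and k′ = k + ((γ − 1)(v·k)/|v|² − γω)v, satisfies Im k′ = 0 and Im ω′ = γ^{−1} Im ω > 0. Hence any mode with Im ω > |Im k| in one inertial frame appears as an unstable mode (real wave vector, positive imaginary frequency) in a boosted frame. -/

import Mathlib

open scoped BigOperators

/-- Let `ω ∈ ℂ` and `k ∈ ℂ³` with `Im k ≠ 0` and `Im ω > |Im k|`.  Set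
`v = (Im k)/(Im ω) ∈ ℝ³` and `γ = (1 − |v|²)^(−1/2)`.  Then `0 < |v| < 1`, and the Lorentz
boost `Λ(v)`, given by `ω' = γ(ω − v·k)` and `k' = k + ((γ − 1)(v·k)/|v|² − γω)v`, yields
`Im k' = 0` and `Im ω' = γ⁻¹ Im ω > 0`: the mode appears as an unstable mode (real wave
vector, positive imaginary frequency) in the boosted frame. -/
theorem unstable_mode_in_boosted_frame (ω : ℂ) (k : Fin 3 → ℂ)
    (hk : (fun i => (k i).im) ≠ 0)
    (hω : Real.sqrt (∑ i, (k i).im ^ 2) < ω.im)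
    (v : Fin 3 → ℝ) (hv : v = fun i => (k i).im / ω.im)
    (γ : ℝ) (hγ : γ = (1 - ∑ i, v i ^ 2) ^ (-(1 : ℝ) / 2))
    (ω' : ℂ) (hω' : ω' = (γ : ℂ) * (ω - ∑ i, (v i : ℂ) * k i))
    (k' : Fin 3 → ℂ)
    (hk' : k' = fun i => k i +
      (((γ : ℂ) - 1) * (∑ j, (v j : ℂ) * k j) / ((∑ j, v j ^ 2 : ℝ) : ℂ) - (γ : ℂ) * ω)
        * (v i : ℂ)) :
    (0 < Real.sqrt (∑ i, v i ^ 2) ∧ Real.sqrt (∑ i, v i ^ 2) < 1) ∧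
      (∀ i, (k' i).im = 0) ∧ ω'.im = γ⁻¹ * ω.im ∧ 0 < ω'.im := by
  have hS : 0 < ∑ i, (k i).im ^ 2 := by
    have hex : ∃ i, (k i).im ≠ 0 := by
      by_contra h; push_neg at h; exact hk (funext fun i => h i)
    obtain ⟨i, hi⟩ := hex
    exact Finset.sum_pos' (fun j _ => sq_nonneg _)
      ⟨i, Finset.mem_univ i, by positivity⟩
  have hωim : 0 < ω.im := lt_of_le_of_lt (Real.sqrt_nonneg _) hω
  have hsv : ∑ i, v i ^ 2 = (∑ i, (k i).im ^ 2) / ω.im ^ 2 := by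
    subst hv
    rw [Finset.sum_div]
    exact Finset.sum_congr rfl fun i _ => by rw [div_pow]
  have hs0 : 0 < ∑ i, v i ^ 2 := by rw [hsv]; positivity
  have hs1 : ∑ i, v i ^ 2 < 1 := by
    rw [hsv, div_lt_one (by positivity)]
    nlinarith [Real.sq_sqrt hS.le, Real.sqrt_nonneg (∑ i, (k i).im ^ 2)]
  have h1s : 0 < 1 - ∑ i, v i ^ 2 := by linarith
  have hγpos : 0 < γ := by rw [hγ]; positivity
  -- imaginary part of v·k
  have hvk : (∑ i, (v i : ℂ) * k i).im = ω.im * ∑ i, v i ^ 2 := by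
    rw [Complex.im_sum, Finset.mul_sum]
    refine Finset.sum_congr rfl fun i _ => ?_
    rw [hv]
    simp [Complex.mul_im]
    field_simp
  -- key rpow identity: γ * (1 - s) = γ⁻¹
  have hγinv : γ * (1 - ∑ i, v i ^ 2) = γ⁻¹ := by
    rw [hγ, ← Real.rpow_neg h1s.le, neg_div, neg_neg]
    nth_rewrite 2 [← Real.rpow_one (1 - ∑ i, v i ^ 2)]
    rw [← Real.rpow_add h1s]
    norm_num
  refine ⟨⟨Real.sqrt_pos.mpr hs0, ?_⟩, ?_, ?_, ?_⟩
  · have := Real.sqrt_lt_sqrt hs0.le hs1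
    simpa using this
  · intro i
    rw [hk']
    simp only [Complex.add_im, Complex.mul_im, Complex.sub_im, Complex.ofReal_im,
      Complex.ofReal_re, mul_zero, zero_mul, add_zero, sub_zero]
    have hdiv : ((((γ : ℂ) - 1) * (∑ j, (v j : ℂ) * k j)) / ((∑ j, v j ^ 2 : ℝ) : ℂ)).im
        = (γ - 1) * (ω.im * ∑ j, v j ^ 2) / (∑ j, v j ^ 2) := by
      rw [Complex.div_ofReal_im, Complex.mul_im]
      simp [hvk]
    rw [hdiv]
    rw [mul_div_assoc, mul_div_assoc, div_self hs0.ne']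
    rw [hv]
    field_simp
    ring
  · rw [hω']
    simp only [Complex.mul_im, Complex.ofReal_im, Complex.ofReal_re, zero_mul, add_zero,
      Complex.sub_im, hvk]
    rw [← hγinv]; ring
  · rw [hω']
    simp only [Complex.mul_im, Complex.ofReal_im, Complex.ofReal_re, zero_mul, add_zero,
      Complex.sub_im, hvk]
    have : ω.im - ω.im * ∑ i, v i ^ 2 = ω.im * (1 - ∑ i, v i ^ 2) := by ring
    rw [this]
    positivity
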